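/- For all natural numbers n, R ≥ 1, any strictly increasing sequence of natural numbers 1 ≤ h_1 < h_2 < ⋯ < h_R, and any permutations σ_1, …, σ_R of {1, …, n}, there exist finite nonempty subsets A_1, …, A_n of the integers ℤ such that for each 1 ≤ r ≤ R and all 1 ≤ j, k ≤ n, one has |h_r A_j| < |h_r A_k| if and only if σ_r(j) < σ_r(k). -/

import Mathlib

open Pointwise

open Finset

set_option linter.unusedVariables false

lemma IccAddIcc (a b c d : ℤ) (hab : a ≤ b) (hcd : c ≤ d) :
    Icc a b + Icc c d = Icc (a + c) (b + d) := by
  apply subset_antisymm (Finset.Icc_add_Icc_subset a b c d)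
  intro x hx
  simp only [mem_Icc] at hx
  rw [Finset.mem_add]
  refine ⟨max a (x - d), by simp only [mem_Icc]; omega, x - max a (x - d), ?_, by ring⟩
  simp only [mem_Icc]
  constructor
  · rcases max_cases a (x - d) with ⟨h1, h2⟩ | ⟨h1, h2⟩ <;> omega
  · rcases max_cases a (x - d) with ⟨h1, h2⟩ | ⟨h1, h2⟩ <;> omega

lemma nsmulIcc (h : ℕ) (m : ℤ) (hm : 0 ≤ m) : h • Icc (0:ℤ) m = Icc 0 (h * m) := by
  induction h with
  | zero => simp [zero_nsmul]; rfl
  | succ k ih =>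
      rw [succ_nsmul, ih, IccAddIcc 0 (k*m) 0 m (by positivity) hm]
      push_cast; ring_nf

/-- The `j`-th block of the `h`-fold sumset of `[0,L] ∪ {N}`. -/
noncomputable def blk (L N : ℤ) (h j : ℕ) : Finset ℤ :=
  Icc ((j:ℤ) * N) ((j:ℤ) * N + ((h:ℤ) - (j:ℤ)) * L)

/-- The gadget set. -/
noncomputable def gad (L N : ℤ) : Finset ℤ := Icc 0 L ∪ {N}

lemma biUnion_add (s : Finset ℕ) (f : ℕ → Finset ℤ) (t : Finset ℤ) :
    s.biUnion f + t = s.biUnion (fun j => f j + t) := by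
  ext x
  simp only [Finset.mem_add, mem_biUnion]
  constructor
  · rintro ⟨y, ⟨j, hj, hy⟩, z, hz, rfl⟩
    exact ⟨j, hj, y, hy, z, hz, rfl⟩
  · rintro ⟨j, hj, y, hy, z, hz, rfl⟩
    exact ⟨y, ⟨j, hj, hy⟩, z, hz, rfl⟩

lemma gad_nsmul (L N : ℤ) (hL : 0 ≤ L) (h : ℕ) :
    h • gad L N = (range (h+1)).biUnion (blk L N h) := by
  induction h with
  | zero =>
      simp only [zero_nsmul, range_one, biUnion_singleton]
      unfold blk
      norm_num
      ext x
      simp [Finset.mem_zero]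
  | succ k ih =>
      have key : ∀ j : ℕ, j ≤ k → (0:ℤ) ≤ ((k:ℤ) - (j:ℤ)) * L := by
        intro j hj
        apply mul_nonneg _ hL
        have : (j:ℤ) ≤ (k:ℤ) := by exact_mod_cast hj
        linarith
      have h1 : ∀ j : ℕ, j ≤ k → blk L N k j + Icc 0 L = blk L N (k+1) j := by
        intro j hj
        unfold blk
        rw [IccAddIcc _ _ _ _ (by linarith [key j hj]) hL]
        congr 1 <;> push_cast <;> ring
      have h2 : ∀ j : ℕ, j ≤ k → blk L N k j + ({N} : Finset ℤ) = blk L N (k+1) (j+1) := by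
        intro j hj
        unfold blk
        rw [← Icc_self N, IccAddIcc _ _ _ _ (by linarith [key j hj]) le_rfl]
        congr 1 <;> push_cast <;> ring
      rw [succ_nsmul, ih, gad, add_union, biUnion_add, biUnion_add]
      ext x
      simp only [mem_union, mem_biUnion, mem_range]
      constructor
      · rintro (⟨j, hj, hx⟩ | ⟨j, hj, hx⟩)
        · exact ⟨j, by omega, (h1 j (by omega)) ▸ hx⟩
        · exact ⟨j+1, by omega, (h2 j (by omega)) ▸ hx⟩
      · rintro ⟨j, hj, hx⟩
        rcases Nat.lt_or_ge j (k+1) with hlt | hge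
        · rcases Nat.eq_zero_or_pos j with rfl | hjpos
          · exact Or.inl ⟨0, by omega, (h1 0 (by omega)).symm ▸ hx⟩
          · exact Or.inl ⟨j, by omega, (h1 j (by omega)).symm ▸ hx⟩
        · have hj' : j = k + 1 := by omega
          subst hj'
          exact Or.inr ⟨k, by omega, (h2 k le_rfl).symm ▸ hx⟩

lemma card_Icc_int (a b : ℤ) (hab : a ≤ b + 1) : ((Icc a b).card : ℤ) = b + 1 - a := by
  rw [Int.card_Icc]
  exact Int.toNat_of_nonneg (by omega)

lemma card_gadU (L N : ℤ) (hL : 1 ≤ L) (hLN : L < N) (h : ℕ) :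
    ∀ t : ℕ, t ≤ h →
      ((((range (t+1)).biUnion (blk L N h)).card : ℤ)
        = (h:ℤ)*L + 1 + ∑ j ∈ Icc 1 t, min (((h:ℤ)-(j:ℤ))*L + 1) (N - L))
      ∧ (range (t+1)).biUnion (blk L N h) ⊆ Icc 0 ((t:ℤ)*N + ((h:ℤ)-(t:ℤ))*L) := by
  intro t
  induction t with
  | zero =>
      intro _
      have hb : (range (0+1)).biUnion (blk L N h) = Icc 0 ((h:ℤ)*L) := by
        simp only [zero_add, range_one, biUnion_singleton]
        unfold blk
        norm_num
      have hhL : (0:ℤ) ≤ (h:ℤ) * L := by positivity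
      constructor
      · rw [hb, card_Icc_int _ _ (by linarith)]
        simp
      · rw [hb]
        intro x hx
        simp only [mem_Icc] at hx ⊢
        push_cast
        constructor <;> linarith [hx.1, hx.2]
  | succ t ih =>
      intro ht1
      have ht : t ≤ h := by omega
      obtain ⟨ihc, ihs⟩ := ih ht
      have htZ : (t:ℤ) + 1 ≤ (h:ℤ) := by exact_mod_cast ht1
      have hrL : (0:ℤ) ≤ ((h:ℤ) - ((t:ℤ)+1)) * L := by
        apply mul_nonneg _ (by linarith)
        linarith
      have hU : (range (t+2)).biUnion (blk L N h)
          = blk L N h (t+1) ∪ (range (t+1)).biUnion (blk L N h) := by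
        rw [range_add_one, biUnion_insert]
      have hblk : blk L N h (t+1)
          = Icc (((t:ℤ)+1)*N) (((t:ℤ)+1)*N + ((h:ℤ)-((t:ℤ)+1))*L) := by
        unfold blk; push_cast; ring_nf
      have hdiff : blk L N h (t+1) \ (range (t+1)).biUnion (blk L N h)
          = Icc (max (((t:ℤ)+1)*N) ((t:ℤ)*N + ((h:ℤ)-(t:ℤ))*L + 1))
              (((t:ℤ)+1)*N + ((h:ℤ)-((t:ℤ)+1))*L) := by
        ext x
        simp only [mem_sdiff, hblk, mem_Icc, max_le_iff]
        constructor
        · rintro ⟨⟨hx1, hx2⟩, hnot⟩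
          refine ⟨⟨hx1, ?_⟩, hx2⟩
          by_contra hcon
          push_neg at hcon
          apply hnot
          apply mem_biUnion.2 ⟨t, mem_range.2 (by omega), ?_⟩
          unfold blk
          simp only [mem_Icc]
          constructor
          · have hN0 : (0:ℤ) ≤ N := by linarith
            nlinarith
          · linarith
        · rintro ⟨⟨hx1, hx2⟩, hx3⟩
          refine ⟨⟨hx1, hx3⟩, fun hmem => ?_⟩
          have := ihs hmem
          simp only [mem_Icc] at this
          linarith [this.2]
      constructor
      · have hcard := card_sdiff_add_card (blk L N h (t+1)) ((range (t+1)).biUnion (blk L N h))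
        rw [← hU] at hcard
        have hcardZ : (((range (t+2)).biUnion (blk L N h)).card : ℤ)
            = ((blk L N h (t+1) \ (range (t+1)).biUnion (blk L N h)).card : ℤ)
              + (((range (t+1)).biUnion (blk L N h)).card : ℤ) := by
          exact_mod_cast congrArg (Nat.cast : ℕ → ℤ) hcard.symm
        rw [hcardZ, ihc, hdiff]
        have hsum : ∑ j ∈ Icc 1 (t+1), min (((h:ℤ)-(j:ℤ))*L + 1) (N - L)
            = (∑ j ∈ Icc 1 t, min (((h:ℤ)-(j:ℤ))*L + 1) (N - L))
              + min (((h:ℤ)-((t:ℤ)+1))*L + 1) (N - L) := by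
          rw [Finset.sum_Icc_succ_top (by omega)]
          norm_cast
        rw [hsum]
        have hkey : ((Icc (max (((t:ℤ)+1)*N) ((t:ℤ)*N + ((h:ℤ)-(t:ℤ))*L + 1))
              (((t:ℤ)+1)*N + ((h:ℤ)-((t:ℤ)+1))*L)).card : ℤ)
            = min (((h:ℤ)-((t:ℤ)+1))*L + 1) (N - L) := by
          rcases le_total ((t:ℤ)*N + ((h:ℤ)-(t:ℤ))*L + 1) (((t:ℤ)+1)*N) with hc | hc
          · rw [max_eq_left hc, card_Icc_int _ _ (by linarith), min_eq_left (by nlinarith)]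
            ring
          · rw [max_eq_right hc, card_Icc_int _ _ (by linarith), min_eq_right (by nlinarith)]
            ring
        rw [hkey]
        ring
      · rw [hU]
        intro x hx
        rcases mem_union.1 hx with hx | hx
        · rw [hblk] at hx
          simp only [mem_Icc] at hx ⊢
          push_cast
          constructor
          · nlinarith [hx.1]
          · linarith [hx.2]
        · have := ihs hx
          simp only [mem_Icc] at this ⊢
          push_cast
          constructor
          · linarith [this.1]
          · nlinarith [this.2]

lemma card_gad (L N : ℤ) (hL : 1 ≤ L) (hLN : L < N) (h : ℕ) :
    ((h • gad L N).card : ℤ)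
      = (h:ℤ)*L + 1 + ∑ j ∈ Icc 1 h, min (((h:ℤ)-(j:ℤ))*L + 1) (N - L) := by
  rw [gad_nsmul L N (by linarith) h]
  exact (card_gadU L N hL hLN h h le_rfl).1

lemma card_gad_const (L N N' : ℤ) (hL : 1 ≤ L) (h : ℕ)
    (hN : (h:ℤ)*L + 1 ≤ N) (hN' : (h:ℤ)*L + 1 ≤ N') (hh : 1 ≤ h) :
    (h • gad L N).card = (h • gad L N').card := by
  have hhZ : (1:ℤ) ≤ (h:ℤ) := by exact_mod_cast hh
  have hLN : L < N := by nlinarith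
  have hLN' : L < N' := by nlinarith
  have e1 := card_gad L N hL hLN h
  have e2 := card_gad L N' hL hLN' h
  have hsum : ∀ (M : ℤ), (h:ℤ)*L + 1 ≤ M →
      ∑ j ∈ Icc 1 h, min (((h:ℤ)-(j:ℤ))*L + 1) (M - L)
        = ∑ j ∈ Icc 1 h, (((h:ℤ)-(j:ℤ))*L + 1) := by
    intro M hM
    apply Finset.sum_congr rfl
    intro j hj
    simp only [mem_Icc] at hj
    have hj1 : (1:ℤ) ≤ (j:ℤ) := by exact_mod_cast hj.1
    have hj2 : (j:ℤ) ≤ (h:ℤ) := by exact_mod_cast hj.2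
    apply min_eq_left
    nlinarith
  have : ((h • gad L N).card : ℤ) = ((h • gad L N').card : ℤ) := by
    rw [e1, e2, hsum N hN, hsum N' hN']
  exact_mod_cast this

lemma card_gad_lt (L N : ℤ) (hL : 1 ≤ L) (hLN : L < N) (h : ℕ) (hh : 1 ≤ h)
    (hN : N ≤ (h:ℤ)*L) : (h • gad L N).card < (h • gad L (N+1)).card := by
  have hhZ : (1:ℤ) ≤ (h:ℤ) := by exact_mod_cast hh
  have : ((h • gad L N).card : ℤ) < ((h • gad L (N+1)).card : ℤ) := by
    rw [card_gad L N hL hLN h, card_gad L (N+1) hL (by linarith) h]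
    have hlt : ∑ j ∈ Icc 1 h, min (((h:ℤ)-(j:ℤ))*L + 1) (N - L)
        < ∑ j ∈ Icc 1 h, min (((h:ℤ)-(j:ℤ))*L + 1) (N + 1 - L) := by
      apply Finset.sum_lt_sum
      · intro i _
        exact min_le_min le_rfl (by linarith)
      · refine ⟨1, mem_Icc.2 ⟨le_rfl, hh⟩, ?_⟩
        push_cast
        rw [min_eq_right (by nlinarith), min_eq_right (by nlinarith)]
        linarith
    linarith
  exact_mod_cast this

lemma gad_nonempty (L N : ℤ) (hL : 0 ≤ L) : (gad L N).Nonempty :=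
  ⟨0, by simp [gad, mem_union, mem_Icc, hL]⟩

lemma gad_subset (L N : ℤ) (hL : 0 ≤ L) (hLN : L ≤ N) : gad L N ⊆ Icc 0 N := by
  intro x hx
  rcases mem_union.1 hx with hx | hx
  · simp only [mem_Icc] at hx ⊢; omega
  · simp only [mem_singleton] at hx
    simp only [mem_Icc]; omega

lemma nsmul_subset_nsmul {s t : Finset ℤ} (hst : s ⊆ t) (h : ℕ) : h • s ⊆ h • t := by
  induction h with
  | zero => simp [zero_nsmul]
  | succ k ih =>
      rw [succ_nsmul, succ_nsmul]
      exact Finset.add_subset_add ih hst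

lemma nsmul_subset_Icc {s : Finset ℤ} {m : ℤ} (hs : s ⊆ Icc 0 m) (hm : 0 ≤ m) (h : ℕ) :
    h • s ⊆ Icc 0 ((h:ℤ) * m) := by
  have := nsmul_subset_nsmul hs h
  rwa [nsmulIcc h m hm] at this

lemma nsmul_nonempty {s : Finset ℤ} (hs : s.Nonempty) (h : ℕ) : (h • s).Nonempty := by
  induction h with
  | zero => rw [zero_nsmul]; exact ⟨0, by simp [Finset.mem_zero]⟩
  | succ k ih => rw [succ_nsmul]; exact ih.add hs

lemma nsmul_singleton_zero (h : ℕ) : h • ({0} : Finset ℤ) = {0} := by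
  induction h with
  | zero => rw [zero_nsmul]; ext x; simp [Finset.mem_zero]
  | succ k ih => rw [succ_nsmul, ih]; ext x; simp [Finset.mem_add]

/-- Base-`m` concatenation. -/
def comb (m : ℤ) (a b : Finset ℤ) : Finset ℤ := a + b.image (fun x => m * x)

lemma image_mul_add (m : ℤ) (s t : Finset ℤ) :
    (s + t).image (fun x => m * x) = s.image (fun x => m * x) + t.image (fun x => m * x) := by
  ext x
  simp only [Finset.mem_image, Finset.mem_add]
  constructor
  · rintro ⟨y, ⟨u, hu, v, hv, rfl⟩, rfl⟩
    exact ⟨m*u, ⟨u, hu, rfl⟩, m*v, ⟨v, hv, rfl⟩, by ring⟩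
  · rintro ⟨y, ⟨u, hu, rfl⟩, z, ⟨v, hv, rfl⟩, rfl⟩
    exact ⟨u + v, ⟨u, hu, v, hv, rfl⟩, by ring⟩

lemma nsmul_image_mul (m : ℤ) (h : ℕ) (b : Finset ℤ) :
    h • (b.image (fun x => m * x)) = (h • b).image (fun x => m * x) := by
  induction h with
  | zero =>
      rw [zero_nsmul, zero_nsmul]
      ext x; simp [Finset.mem_zero]
  | succ k ih =>
      rw [succ_nsmul, succ_nsmul, ih, image_mul_add]

lemma nsmul_comb (m : ℤ) (a b : Finset ℤ) (h : ℕ) :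
    h • comb m a b = comb m (h • a) (h • b) := by
  unfold comb
  rw [nsmul_add, nsmul_image_mul]

lemma card_comb' (m : ℤ) (a b : Finset ℤ) (ha : ∀ x ∈ a, 0 ≤ x ∧ x < m) :
    (a + b.image (fun x => m * x)).card = a.card * b.card := by
  have himg : a + b.image (fun x => m * x) = (a ×ˢ b).image (fun p => p.1 + m * p.2) := by
    ext x
    simp only [Finset.mem_add, Finset.mem_image, Finset.mem_product, Prod.exists]
    constructor
    · rintro ⟨y, hy, z, ⟨v, hv, rfl⟩, rfl⟩
      exact ⟨y, v, ⟨hy, hv⟩, rfl⟩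
    · rintro ⟨y, v, ⟨hy, hv⟩, rfl⟩
      exact ⟨y, hy, m*v, ⟨v, hv, rfl⟩, rfl⟩
  rw [himg, Finset.card_image_of_injOn, Finset.card_product]
  intro p hp q hq hpq
  simp only [Finset.coe_product, Set.mem_prod, mem_coe] at hp hq
  simp only at hpq
  obtain ⟨hp1, hp2⟩ := ha p.1 hp.1
  obtain ⟨hq1, hq2⟩ := ha q.1 hq.1
  have hm : 0 < m := by omega
  have h1 : p.1 = q.1 := by
    have e1 : (p.1 + m * p.2) % m = p.1 := by
      rw [Int.add_mul_emod_self_left, Int.emod_eq_of_lt hp1 hp2]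
    have e2 : (q.1 + m * q.2) % m = q.1 := by
      rw [Int.add_mul_emod_self_left, Int.emod_eq_of_lt hq1 hq2]
    rw [← e1, ← e2, hpq]
  have h2 : p.2 = q.2 := by
    have := hpq
    rw [h1] at this
    have hmul : m * p.2 = m * q.2 := by omega
    exact mul_left_cancel₀ (by omega) hmul
  exact Prod.ext h1 h2

lemma card_nsmul_comb (m : ℤ) (a b : Finset ℤ) (h : ℕ)
    (ha : ∀ x ∈ h • a, 0 ≤ x ∧ x < m) :
    (h • comb m a b).card = (h • a).card * (h • b).card := by
  rw [nsmul_comb]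
  exact card_comb' m (h • a) (h • b) ha

lemma comb_subset (m α β : ℤ) (a b : Finset ℤ) (ha : a ⊆ Icc 0 α) (hb : b ⊆ Icc 0 β)
    (hm : 0 ≤ m) : comb m a b ⊆ Icc 0 (α + m * β) := by
  intro x hx
  rw [comb, Finset.mem_add] at hx
  obtain ⟨y, hy, z, hz, rfl⟩ := hx
  obtain ⟨v, hv, rfl⟩ := Finset.mem_image.1 hz
  have h1 := mem_Icc.1 (ha hy)
  have h2 := mem_Icc.1 (hb hv)
  simp only [mem_Icc]
  constructor
  · nlinarith
  · nlinarith

lemma comb_nonempty (m : ℤ) (a b : Finset ℤ) (ha : a.Nonempty) (hb : b.Nonempty) :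
    (comb m a b).Nonempty := by
  obtain ⟨x, hx⟩ := ha
  obtain ⟨y, hy⟩ := hb
  exact ⟨x + m * y, Finset.mem_add.2 ⟨x, hx, m*y, Finset.mem_image.2 ⟨y, hy, rfl⟩, rfl⟩⟩

/-- Iterated base-`m` concatenation of `G` with itself (`k`-fold "power"). -/
def pk (m : ℤ) (G : Finset ℤ) : ℕ → Finset ℤ
  | 0 => {0}
  | k+1 => comb m G (pk m G k)

/-- Bound for `pk`. -/
def pkb (γ m : ℤ) : ℕ → ℤ
  | 0 => 0
  | k+1 => γ + m * pkb γ m k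

lemma pkb_nonneg (γ m : ℤ) (hγ : 0 ≤ γ) (hm : 0 ≤ m) : ∀ k, 0 ≤ pkb γ m k
  | 0 => le_refl 0
  | (k+1) => by
      have := pkb_nonneg γ m hγ hm k
      unfold pkb
      nlinarith

lemma pk_subset (m γ : ℤ) (G : Finset ℤ) (hG : G ⊆ Icc 0 γ) (hγ : 0 ≤ γ) (hm : 0 ≤ m) :
    ∀ k, pk m G k ⊆ Icc 0 (pkb γ m k)
  | 0 => by
      unfold pk pkb
      intro x hx
      simp only [mem_singleton] at hx
      simp [hx]
  | (k+1) => by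
      unfold pk pkb
      exact comb_subset m γ (pkb γ m k) G (pk m G k) hG (pk_subset m γ G hG hγ hm k) hm

lemma pk_nonempty (m : ℤ) (G : Finset ℤ) (hG : G.Nonempty) : ∀ k, (pk m G k).Nonempty
  | 0 => ⟨0, by simp [pk]⟩
  | (k+1) => comb_nonempty m G (pk m G k) hG (pk_nonempty m G hG k)

lemma card_pk (m : ℤ) (G : Finset ℤ) (h : ℕ) (hG : ∀ x ∈ h • G, 0 ≤ x ∧ x < m) :
    ∀ k, (h • pk m G k).card = (h • G).card ^ k
  | 0 => by
      unfold pk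
      rw [nsmul_singleton_zero, pow_zero, card_singleton]
  | (k+1) => by
      unfold pk
      rw [card_nsmul_comb m G (pk m G k) h hG, card_pk m G h hG k, pow_succ]
      ring

lemma binom_aux (a : ℕ) : ∀ k : ℕ, a ^ k + k * a ^ (k-1) ≤ (a+1) ^ k
  | 0 => by norm_num
  | (k+1) => by
      have ih := binom_aux a k
      have h1 : (a+1)^(k+1) = (a+1)^k * (a+1) := by ring
      have h2 : (a^k + k * a^(k-1)) * (a+1) ≤ (a+1)^k * (a+1) :=
        Nat.mul_le_mul_right _ ih
      have h3 : a^(k+1) + (k+1) * a^k ≤ (a^k + k * a^(k-1)) * (a+1) := by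
        rcases Nat.eq_zero_or_pos k with rfl | hk
        · simp [Nat.mul_comm]
        · have he : a^(k-1) * a = a^k := by
            rw [← pow_succ]
            congr 1
            omega
          calc a^(k+1) + (k+1) * a^k = a^k * a + k * a^k + a^k := by ring
            _ ≤ a^k * a + k * (a^(k-1) * a) + (a^k + k * a^(k-1)) := by
                rw [he]; omega
            _ = (a^k + k * a^(k-1)) * (a+1) := by ring
      simp only [Nat.add_sub_cancel]
      omega

lemma dominate (a b x y A : ℕ) (ha : 1 ≤ a) (hab : a < b) (hx : 1 ≤ x)
    (hyA : y ≤ A) (k : ℕ) (hk : a * A + 1 ≤ k) :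
    a ^ k * y < b ^ k * x := by
  have hk1 : 1 ≤ k := by nlinarith
  have key : a ^ k * A < (a+1) ^ k := by
    have h1 := binom_aux a k
    have h2 : a * A * a^(k-1) + a^(k-1) ≤ k * a^(k-1) := by
      have : a * A + 1 ≤ k := hk
      calc a * A * a^(k-1) + a^(k-1) = (a * A + 1) * a^(k-1) := by ring
        _ ≤ k * a^(k-1) := Nat.mul_le_mul_right _ hk
    have h3 : a * a^(k-1) = a^k := by
      rw [← pow_succ']
      congr 1
      omega
    have h4 : a^k * A ≤ a * A * a^(k-1) := by
      rw [← h3]; ring_nf; omega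
    have h5 : 1 ≤ a^(k-1) := Nat.one_le_pow _ _ (by omega)
    omega
  calc a ^ k * y ≤ a ^ k * A := Nat.mul_le_mul_left _ hyA
    _ < (a+1)^k := key
    _ ≤ (a+1)^k * x := by nlinarith [Nat.one_le_pow k (a+1) (by omega)]
    _ ≤ b^k * x := Nat.mul_le_mul_right _ (Nat.pow_le_pow_left (by omega) k)

lemma order_iff {n : ℕ} (f : Fin n → ℕ) (π : Equiv.Perm (Fin n))
    (hf : ∀ j k, π j < π k → f j < f k) :
    ∀ j k, f j < f k ↔ π j < π k := by
  intro j k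
  constructor
  · intro hlt
    rcases lt_trichotomy (π j) (π k) with hc | hc | hc
    · exact hc
    · have : j = k := π.injective (Fin.ext (by omega))
      subst this; omega
    · exact absurd (hf k j hc) (by omega)
  · exact hf j k

lemma main_aux (n : ℕ) : ∀ R : ℕ, ∀ h : Fin (R+1) → ℕ, StrictMono h → (∀ r, 1 ≤ h r) →
    ∀ σ : Fin (R+1) → Equiv.Perm (Fin n),
    ∃ (A : Fin n → Finset ℤ) (β : ℤ), 0 ≤ β ∧
      (∀ j, (A j).Nonempty ∧ A j ⊆ Icc 0 β) ∧
      (∀ r j k, (h r • A j).card < (h r • A k).card ↔ σ r j < σ r k) := by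
  intro R
  induction R with
  | zero =>
      intro h hmono hpos σ
      have h1 : 1 ≤ h 0 := hpos 0
      refine ⟨fun j => Icc 0 (((σ 0 j : ℕ) : ℤ)), (n:ℤ), by positivity, ?_, ?_⟩
      · intro j
        constructor
        · exact ⟨0, mem_Icc.2 ⟨le_rfl, by positivity⟩⟩
        · intro x hx
          simp only [mem_Icc] at hx ⊢
          have := (σ 0 j).isLt
          omega
      · intro r j k
        have hr0 : r = 0 := Fin.ext (by omega)
        subst hr0
        have cardf : ∀ i : Fin n, ((h 0 • Icc (0:ℤ) ((σ 0 i : ℕ) : ℤ)).card : ℤ)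
            = (h 0 : ℤ) * ((σ 0 i : ℕ) : ℤ) + 1 := by
          intro i
          rw [nsmulIcc _ _ (by positivity), card_Icc_int _ _ (by positivity)]
          ring
        constructor
        · intro hlt
          have : ((h 0 • Icc (0:ℤ) ((σ 0 j : ℕ) : ℤ)).card : ℤ)
              < ((h 0 • Icc (0:ℤ) ((σ 0 k : ℕ) : ℤ)).card : ℤ) := by exact_mod_cast hlt
          rw [cardf j, cardf k] at this
          have hZ : ((σ 0 j : ℕ) : ℤ) < ((σ 0 k : ℕ) : ℤ) := by
            by_contra hcon
            push_neg at hcon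
            have : (h 0 : ℤ) * ((σ 0 k : ℕ) : ℤ) ≤ (h 0 : ℤ) * ((σ 0 j : ℕ) : ℤ) :=
              mul_le_mul_of_nonneg_left hcon (by positivity)
            omega
          rw [Fin.lt_def]
          exact_mod_cast hZ
        · intro hlt
          rw [Fin.lt_def] at hlt
          have hZ : ((σ 0 j : ℕ) : ℤ) < ((σ 0 k : ℕ) : ℤ) := by exact_mod_cast hlt
          have : ((h 0 • Icc (0:ℤ) ((σ 0 j : ℕ) : ℤ)).card : ℤ)
              < ((h 0 • Icc (0:ℤ) ((σ 0 k : ℕ) : ℤ)).card : ℤ) := by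
            rw [cardf j, cardf k]
            have : (h 0 : ℤ) * ((σ 0 j : ℕ) : ℤ) < (h 0 : ℤ) * ((σ 0 k : ℕ) : ℤ) := by
              apply mul_lt_mul_of_pos_left hZ
              exact_mod_cast h1
            omega
          exact_mod_cast this
  | succ R ihR =>
      intro h hmono hpos σ
      obtain ⟨A', β', hβ'0, hA', hord'⟩ :=
        ihR (fun s => h s.castSucc)
          (fun a b hab => hmono (by simpa [Fin.castSucc_lt_castSucc_iff] using hab))
          (fun s => hpos _) (fun s => σ s.castSucc)
      set hl : ℕ := h (Fin.last (R+1)) with hhl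
      set hp : ℕ := h ((Fin.last R).castSucc) with hhp
      have hpl : hp < hl := hmono (Fin.castSucc_lt_last _)
      have hp1 : 1 ≤ hp := hpos _
      have hl1 : 1 ≤ hl := hpos _
      set L : ℤ := (n:ℤ) + 2 with hLdef
      have hL1 : (1:ℤ) ≤ L := by rw [hLdef]; linarith [Int.natCast_nonneg n]
      set NN : ℕ → ℤ := fun v => (hp:ℤ)*L + 2 + v with hNN
      have hLNN : ∀ v : ℕ, L < NN v := by
        intro v
        have : (1:ℤ) ≤ (hp:ℤ) := by exact_mod_cast hp1
        simp only [hNN]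
        nlinarith [Int.natCast_nonneg v]
      set G : ℕ → Finset ℤ := fun v => gad L (NN v) with hG
      set γ : ℤ := (hp:ℤ)*L + 2 + n with hγ
      have hγ0 : 0 ≤ γ := by positivity
      have hGsub : ∀ v : ℕ, v ≤ n → G v ⊆ Icc 0 γ := by
        intro v hv
        refine (gad_subset L (NN v) (by linarith) (le_of_lt (hLNN v))).trans ?_
        apply Icc_subset_Icc le_rfl
        simp only [hNN, hγ]
        have : (v:ℤ) ≤ (n:ℤ) := by exact_mod_cast hv
        linarith
      have hGne : ∀ v : ℕ, (G v).Nonempty := fun v => gad_nonempty _ _ (by linarith)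
      -- constancy at lower levels
      have gconst : ∀ (s : Fin (R+1)) (v w : ℕ),
          (h s.castSucc • G v).card = (h s.castSucc • G w).card := by
        intro s v w
        have hs : h s.castSucc ≤ hp := by
          apply hmono.monotone
          exact Fin.castSucc_le_castSucc_iff.2 (Fin.le_last s)
        have hb : ∀ u : ℕ, ((h s.castSucc : ℕ):ℤ)*L + 1 ≤ NN u := by
          intro u
          have hsZ : ((h s.castSucc : ℕ):ℤ) ≤ (hp:ℤ) := by exact_mod_cast hs
          simp only [hNN]
          nlinarith [Int.natCast_nonneg u]
        exact card_gad_const L (NN v) (NN w) hL1 _ (hb v) (hb w) (hpos _)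
      -- strict monotonicity at the top level
      have gstep : ∀ v : ℕ, v + 1 ≤ n → (hl • G v).card < (hl • G (v+1)).card := by
        intro v hv
        have hNN1 : NN (v+1) = NN v + 1 := by simp only [hNN]; push_cast; ring
        show (hl • gad L (NN v)).card < (hl • gad L (NN (v+1))).card
        rw [hNN1]
        apply card_gad_lt L (NN v) hL1 (hLNN v) hl hl1
        have h1 : (hp:ℤ) + 1 ≤ (hl:ℤ) := by exact_mod_cast hpl
        have h2 : (v:ℤ) + 1 ≤ (n:ℤ) := by exact_mod_cast hv
        simp only [hNN]
        nlinarith [Int.natCast_nonneg v, Int.natCast_nonneg hp]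
      have gmono : ∀ v w : ℕ, v < w → w ≤ n → (hl • G v).card < (hl • G w).card := by
        have aux : ∀ d v : ℕ, v + d + 1 ≤ n → (hl • G v).card < (hl • G (v+d+1)).card := by
          intro d
          induction d with
          | zero => intro v hv; exact gstep v (by omega)
          | succ e ihe =>
              intro v hv
              have h1 := ihe v (by omega)
              have h2 := gstep (v+e+1) (by omega)
              have : v + (e+1) + 1 = (v+e+1) + 1 := by omega
              rw [this]
              omega
        intro v w hvw hw
        have : w = v + (w - v - 1) + 1 := by omega
        rw [this]
        exact aux (w - v - 1) v (by omega)
      -- bounds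
      set gmax : ℕ := (Icc (0:ℤ) ((hl:ℤ) * γ)).card with hgmax
      have hgbound : ∀ v : ℕ, v ≤ n → (hl • G v).card ≤ gmax := by
        intro v hv
        exact Finset.card_le_card (nsmul_subset_Icc (hGsub v hv) hγ0 hl)
      set amax : ℕ := (Icc (0:ℤ) ((hl:ℤ) * β')).card with hamax
      have habound : ∀ j, (hl • A' j).card ≤ amax := by
        intro j
        exact Finset.card_le_card (nsmul_subset_Icc (hA' j).2 hβ'0 hl)
      set K : ℕ := gmax * amax + 1 with hK
      set m1 : ℤ := (hl:ℤ) * γ + 1 with hm1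
      have hm1pos : (0:ℤ) < m1 := by positivity
      have hGm1 : ∀ (r : Fin (R+2)) (v : ℕ), v ≤ n → ∀ x ∈ h r • G v, 0 ≤ x ∧ x < m1 := by
        intro r v hv x hx
        have hrl : h r ≤ hl := hmono.monotone (Fin.le_last r)
        have hsub := nsmul_subset_Icc (hGsub v hv) hγ0 (h r)
        have := mem_Icc.1 (hsub hx)
        have hrlZ : ((h r : ℕ):ℤ) ≤ (hl:ℤ) := by exact_mod_cast hrl
        constructor
        · exact this.1
        · have : x ≤ ((h r : ℕ):ℤ) * γ := this.2
          have h2 : ((h r : ℕ):ℤ) * γ ≤ (hl:ℤ) * γ := mul_le_mul_of_nonneg_right hrlZ hγ0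
          simp only [hm1]
          omega
      set P : ℕ → Finset ℤ := fun v => pk m1 (G v) K with hP
      set βP : ℤ := pkb γ m1 K with hβP
      have hβP0 : 0 ≤ βP := pkb_nonneg γ m1 hγ0 (le_of_lt hm1pos) K
      have hPsub : ∀ v : ℕ, v ≤ n → P v ⊆ Icc 0 βP := by
        intro v hv
        exact pk_subset m1 γ (G v) (hGsub v hv) hγ0 (le_of_lt hm1pos) K
      have hPne : ∀ v : ℕ, (P v).Nonempty := fun v => pk_nonempty m1 (G v) (hGne v) K
      have hPcard : ∀ (r : Fin (R+2)) (v : ℕ), v ≤ n →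
          (h r • P v).card = (h r • G v).card ^ K := by
        intro r v hv
        exact card_pk m1 (G v) (h r) (hGm1 r v hv) K
      set M : ℤ := (hl:ℤ) * βP + 1 with hM
      have hMpos : (0:ℤ) < M := by positivity
      set vj : Fin n → ℕ := fun j => (σ (Fin.last (R+1)) j : ℕ) with hvj
      have hvjn : ∀ j, vj j ≤ n := fun j => le_of_lt (σ (Fin.last (R+1)) j).isLt
      set A : Fin n → Finset ℤ := fun j => comb M (P (vj j)) (A' j) with hA
      have cardA : ∀ (r : Fin (R+2)) (j : Fin n),
          (h r • A j).card = (h r • G (vj j)).card ^ K * (h r • A' j).card := by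
        intro r j
        show (h r • comb M (P (vj j)) (A' j)).card = _
        rw [card_nsmul_comb M (P (vj j)) (A' j) (h r) ?_, hPcard r (vj j) (hvjn j)]
        intro x hx
        have hrl : h r ≤ hl := hmono.monotone (Fin.le_last r)
        have hrlZ : ((h r : ℕ):ℤ) ≤ (hl:ℤ) := by exact_mod_cast hrl
        have hsub := nsmul_subset_Icc (hPsub (vj j) (hvjn j)) hβP0 (h r)
        have hmem := mem_Icc.1 (hsub hx)
        constructor
        · exact hmem.1
        · have h2 : ((h r : ℕ):ℤ) * βP ≤ (hl:ℤ) * βP := mul_le_mul_of_nonneg_right hrlZ hβP0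
          simp only [hM]
          omega
      refine ⟨A, βP + M * β', by positivity, ?_, ?_⟩
      · intro j
        constructor
        · exact comb_nonempty M _ _ (hPne (vj j)) (hA' j).1
        · exact comb_subset M βP β' _ _ (hPsub (vj j) (hvjn j)) (hA' j).2 (le_of_lt hMpos)
      · intro r j k
        induction r using Fin.lastCases with
        | last =>
            apply order_iff (fun j => (h (Fin.last (R+1)) • A j).card) (σ (Fin.last (R+1)))
            intro j k hjk
            show (h (Fin.last (R+1)) • A j).card < (h (Fin.last (R+1)) • A k).card
            rw [cardA, cardA]
            have hvlt : vj j < vj k := hjk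
            have hjn := hvjn j
            have hkn := hvjn k
            apply dominate _ _ _ _ amax
            · exact Finset.card_pos.2 (nsmul_nonempty (hGne (vj j)) hl)
            · exact gmono (vj j) (vj k) hvlt hkn
            · exact Finset.card_pos.2 (nsmul_nonempty (hA' k).1 hl)
            · exact habound j
            · have := hgbound (vj j) hjn
              calc (hl • G (vj j)).card * amax + 1 ≤ gmax * amax + 1 :=
                    by exact Nat.add_le_add_right (Nat.mul_le_mul_right _ this) 1
                _ = K := rfl
        | cast s =>
            have hcs : (h s.castSucc • G (vj j)).card = (h s.castSucc • G (vj k)).card :=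
              gconst s (vj j) (vj k)
            rw [cardA, cardA, hcs]
            have hpow : 0 < (h s.castSucc • G (vj k)).card ^ K :=
              pow_pos (Finset.card_pos.2 (nsmul_nonempty (hGne (vj k)) _)) K
            rw [Nat.mul_lt_mul_left hpow]
            exact hord' s j k

/-- For all `n, R ≥ 1`, any strictly increasing sequence `1 ≤ h_1 < ⋯ < h_R` of natural
numbers, and any permutations `σ_1, …, σ_R` of `{1, …, n}`, there exist finite nonempty
subsets `A_1, …, A_n ⊆ ℤ` such that for each `r`, the quantities `|h_r A_1|, …, |h_r A_n|`
have the same relative order as `σ_r`.  (Here `h • A` denotes the `h`-fold sumset.) -/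
theorem prescribed_h_integers (n R : ℕ) (hn : 1 ≤ n) (hR : 1 ≤ R)
    (h : Fin R → ℕ) (hmono : StrictMono h) (hpos : ∀ r, 1 ≤ h r)
    (σ : Fin R → Equiv.Perm (Fin n)) :
    ∃ A : Fin n → Finset ℤ,
      (∀ k, (A k).Nonempty) ∧
      ∀ r : Fin R, ∀ j k : Fin n,
        (h r • A j).card < (h r • A k).card ↔ σ r j < σ r k := by
  obtain ⟨R', rfl⟩ : ∃ R', R = R' + 1 := ⟨R - 1, by omega⟩
  obtain ⟨A, β, _, hne, hord⟩ := main_aux n R' h hmono hpos σ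
  exact ⟨A, fun k => (hne k).1, hord⟩
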